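/- arXiv:2012.13039 — 2 statements merged into one kernel-verified Lean document; each statement's English description precedes it below -/
import Mathlib

section
/- Let K be a finite abstract simplicial complex on a vertex type V, and let u, v be distinct adjacent vertices of K (i.e., {u, v} ∈ K) such that V_K(u) \ {v} = V_K(v) \ {u} and, for every nonempty subset W ⊆ V_K(u) \ {v}, one has W ∪ {u} ∈ K if and only if W ∪ {v} ∈ K. Let π : V → V be the map with π(v) = u and π(z) = z for all z ≠ v. Then the image of K under the induced map on simplices, {π(σ) : σ ∈ K}, equals {σ ∈ K : v ∉ σ}, and this family is a subcomplex of K. In particular, the adjacent-vertex identification of u and v (taking the identified vertex to be c = u) maps K onto a subcomplex of K. -/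
/-- An abstract simplicial complex on a vertex type `V`: a finite set of nonempty
finite subsets of `V` closed under taking nonempty subsets. -/
def IsSimplicialComplex {V : Type*} (K : Finset (Finset V)) : Prop :=
  (∀ σ ∈ K, σ.Nonempty) ∧ (∀ σ ∈ K, ∀ τ : Finset V, τ ⊆ σ → τ.Nonempty → τ ∈ K)

/-- `Nbrs K u` is the set `V_K(u)` of vertices adjacent to `u` in `K`
(vertices `z ≠ u` spanning a common simplex with `u`, equivalently `{u, z} ∈ K`);
note `u ∉ Nbrs K u`. -/
def Nbrs {V : Type*} [DecidableEq V] (K : Finset (Finset V)) (u : V) : Set V :=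
  {z | z ≠ u ∧ ({u, z} : Finset V) ∈ K}

/-- Adjacent-vertex identification maps a complex onto a subcomplex of itself:
if `u, v` are distinct adjacent vertices of `K` with `V_K(u) \ {v} = V_K(v) \ {u}`
and, for each nonempty `W ⊆ V_K(u) \ {v}`, `W ∪ {u} ∈ K ↔ W ∪ {v} ∈ K`, and
`π : V → V` sends `v` to `u` and fixes every other vertex, then
`{π(σ) : σ ∈ K} = {σ ∈ K : v ∉ σ}`, and this family is a subcomplex of `K`. -/
theorem adjacent_vertex_identification {V : Type*} [DecidableEq V]
    (K : Finset (Finset V)) (hK : IsSimplicialComplex K)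
    (u v : V) (huv : u ≠ v) (hadj : ({u, v} : Finset V) ∈ K)
    (hlink : Nbrs K u \ {v} = Nbrs K v \ {u})
    (hmatch : ∀ W : Finset V, W.Nonempty → ↑W ⊆ Nbrs K u \ {v} →
      (insert u W ∈ K ↔ insert v W ∈ K)) :
    K.image (fun σ => σ.image (fun z => if z = v then u else z)) =
      K.filter (fun σ => v ∉ σ) ∧
    IsSimplicialComplex (K.filter (fun σ => v ∉ σ)) ∧
    K.filter (fun σ => v ∉ σ) ⊆ K := by
  set π := fun z => if z = v then u else z with hπdef
  have himg : ∀ σ : Finset V, v ∈ σ → σ.image π = insert u (σ.erase v) := by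
    intro σ hv
    ext x
    simp only [Finset.mem_image, Finset.mem_insert, Finset.mem_erase, π]
    constructor
    · rintro ⟨z, hz, hzx⟩
      by_cases h : z = v
      · left; simp [h] at hzx; exact hzx.symm
      · right; simp [h] at hzx; subst hzx; exact ⟨h, hz⟩
    · rintro (rfl | ⟨hx, hxσ⟩)
      · exact ⟨v, hv, by simp⟩
      · exact ⟨x, hxσ, by simp [hx]⟩
  have himg2 : ∀ σ : Finset V, v ∉ σ → σ.image π = σ := by
    intro σ hv
    apply Finset.image_congr (g := id) ?_ |>.trans (Finset.image_id)
    intro x hx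
    simp only [π]
    rw [if_neg]; · rfl
    rintro rfl; exact hv hx
  -- key lemma
  have hkey : ∀ σ ∈ K, v ∈ σ → insert u (σ.erase v) ∈ K := by
    intro σ hσ hv
    by_cases hu : u ∈ σ
    · apply hK.2 σ hσ
      · intro x hx
        simp only [Finset.mem_insert, Finset.mem_erase] at hx
        rcases hx with rfl | ⟨_, h⟩
        · exact hu
        · exact h
      · exact ⟨u, Finset.mem_insert_self _ _⟩
    · rcases Finset.eq_empty_or_nonempty (σ.erase v) with he | hne
      · rw [he]
        apply hK.2 _ hadj
        · intro x hx
          simp only [Finset.mem_insert, Finset.notMem_empty, or_false] at hx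
          simp [hx]
        · exact ⟨u, by simp⟩
      · have hsub : ↑(σ.erase v) ⊆ Nbrs K u \ {v} := by
          rw [hlink]
          intro z hz
          simp only [Finset.coe_erase, Set.mem_diff, Set.mem_singleton_iff,
            Finset.mem_coe] at hz ⊢
          obtain ⟨hzσ, hzv⟩ := hz
          refine ⟨⟨hzv, ?_⟩, fun h => hu (h ▸ hzσ)⟩
          apply hK.2 σ hσ
          · intro x hx
            simp only [Finset.mem_insert, Finset.mem_singleton] at hx
            rcases hx with rfl | rfl
            · exact hv
            · exact hzσ
          · exact ⟨v, by simp⟩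
        have := (hmatch _ hne hsub).mpr
        rw [Finset.insert_erase hv] at this
        exact this hσ
  refine ⟨?_, ⟨?_, ?_⟩, Finset.filter_subset _ _⟩
  · ext τ
    simp only [Finset.mem_image, Finset.mem_filter]
    constructor
    · rintro ⟨σ, hσ, rfl⟩
      by_cases hv : v ∈ σ
      · rw [himg σ hv]
        refine ⟨hkey σ hσ hv, ?_⟩
        simp only [Finset.mem_insert, Finset.mem_erase, not_or]
        exact ⟨fun h => huv h.symm, fun h => h.1 rfl⟩
      · rw [himg2 σ hv]; exact ⟨hσ, hv⟩
    · rintro ⟨hτ, hv⟩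
      exact ⟨τ, hτ, himg2 τ hv⟩
  · intro σ hσ
    exact hK.1 σ (Finset.mem_filter.mp hσ).1
  · intro σ hσ τ hsub hne
    rw [Finset.mem_filter] at hσ ⊢
    exact ⟨hK.2 σ hσ.1 τ hsub hne, fun h => hσ.2 (hsub h)⟩
end

section
/- Let K be a finite abstract simplicial complex on a vertex type V, and let u, v be distinct nonadjacent vertices of K (i.e., {u} ∈ K and {v} ∈ K but {u, v} ∉ K) such that V_K(u) = V_K(v) and, for every nonempty subset W ⊆ V_K(u), one has W ∪ {u} ∈ K if and only if W ∪ {v} ∈ K. Let π : V → V be the map with π(v) = u and π(z) = z for all z ≠ v. Then the image of K under the induced map on simplices, {π(σ) : σ ∈ K}, equals {σ ∈ K : v ∉ σ}, and this family is a subcomplex of K. In particular, the nonadjacent-vertex identification of u and v (taking the identified vertex to be c = u) maps K onto a subcomplex of K, and is therefore mutually inverse with the inclusion of this subcomplex into K. -/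
/-- Nonadjacent-vertex identification maps a complex onto a subcomplex of itself
(and hence is mutually inverse with the inclusion of this subcomplex): if `u, v` are
distinct nonadjacent vertices of `K` with `V_K(u) = V_K(v)` and, for each nonempty
`W ⊆ V_K(u)`, `W ∪ {u} ∈ K ↔ W ∪ {v} ∈ K`, and `π : V → V` sends `v` to `u` and fixes
every other vertex, then `{π(σ) : σ ∈ K} = {σ ∈ K : v ∉ σ}`, a subcomplex of `K`. -/
theorem nonadjacent_vertex_identification {V : Type*} [DecidableEq V]
    (K : Finset (Finset V)) (hK : IsSimplicialComplex K)
    (u v : V) (huv : u ≠ v)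
    (hu : ({u} : Finset V) ∈ K) (hv : ({v} : Finset V) ∈ K)
    (hnadj : ({u, v} : Finset V) ∉ K)
    (hlink : Nbrs K u = Nbrs K v)
    (hmatch : ∀ W : Finset V, W.Nonempty → ↑W ⊆ Nbrs K u →
      (insert u W ∈ K ↔ insert v W ∈ K)) :
    K.image (fun σ => σ.image (fun z => if z = v then u else z)) =
      K.filter (fun σ => v ∉ σ) ∧
    IsSimplicialComplex (K.filter (fun σ => v ∉ σ)) ∧
    K.filter (fun σ => v ∉ σ) ⊆ K := by
  obtain ⟨hne, hsub⟩ := hK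
  refine ⟨?_, ⟨?_, ?_⟩, Finset.filter_subset _ _⟩
  · ext τ
    simp only [Finset.mem_image, Finset.mem_filter]
    constructor
    · rintro ⟨σ, hσ, rfl⟩
      have hvnot : v ∉ σ.image (fun z => if z = v then u else z) := by
        simp only [Finset.mem_image]
        rintro ⟨z, hz, hzv⟩
        by_cases h : z = v
        · rw [if_pos h] at hzv; exact huv hzv
        · rw [if_neg h] at hzv; exact h hzv
      refine ⟨?_, hvnot⟩
      by_cases hvσ : v ∈ σ
      · set W := σ.erase v with hW
        have himg : σ.image (fun z => if z = v then u else z) = insert u W := by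
          ext x
          simp only [Finset.mem_image, Finset.mem_insert, hW, Finset.mem_erase]
          constructor
          · rintro ⟨z, hz, hzx⟩
            by_cases h : z = v
            · rw [if_pos h] at hzx; left; exact hzx.symm
            · rw [if_neg h] at hzx; right; exact ⟨hzx ▸ h, hzx ▸ hz⟩
          · rintro (rfl | ⟨hxv, hxσ⟩)
            · exact ⟨v, hvσ, by simp⟩
            · exact ⟨x, hxσ, by simp [hxv]⟩
        rw [himg]
        rcases W.eq_empty_or_nonempty with hWe | hWne
        · simpa [hWe] using hu
        · have hWnbr : ↑W ⊆ Nbrs K u := by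
            rw [hlink]
            intro w hw
            simp only [hW, Finset.coe_erase, Set.mem_diff, Finset.mem_coe,
              Set.mem_singleton_iff] at hw
            refine ⟨hw.2, ?_⟩
            have hss : ({v, w} : Finset V) ⊆ σ := by
              intro x hx
              simp only [Finset.mem_insert, Finset.mem_singleton] at hx
              rcases hx with rfl | rfl
              · exact hvσ
              · exact hw.1
            exact hsub σ hσ _ hss ⟨v, by simp⟩
          have hins : insert v W ∈ K := by
            have : insert v W = σ := Finset.insert_erase hvσ
            rwa [this]
          exact (hmatch W hWne hWnbr).mpr hins
      · have : σ.image (fun z => if z = v then u else z) = σ := by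
          apply Finset.image_congr (g := id) ?_ |>.trans (Finset.image_id)
          intro z hz
          simp only [Finset.mem_coe] at hz
          have : z ≠ v := fun h => hvσ (h ▸ hz)
          simp [this]
        rw [this]; exact hσ
    · rintro ⟨hτ, hvτ⟩
      refine ⟨τ, hτ, ?_⟩
      apply Finset.image_congr (g := id) ?_ |>.trans (Finset.image_id)
      intro z hz
      simp only [Finset.mem_coe] at hz
      have : z ≠ v := fun h => hvτ (h ▸ hz)
      simp [this]
  · intro σ hσ
    exact hne σ (Finset.mem_filter.mp hσ).1
  · intro σ hσ τ hτσ hτne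
    rw [Finset.mem_filter] at hσ ⊢
    exact ⟨hsub σ hσ.1 τ hτσ hτne, fun h => hσ.2 (hτσ h)⟩
end
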